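/- Let p be a prime and n = p^l with l ≥ 1. Define bijections λ and μ of M = {0, 1, …, n−1} by λ(i) = (i+1) mod n, and μ(i) = i+1 if i ≢ p−1 (mod p), μ(i) = i − (p−1) if i ≡ p−1 (mod p). Then the subgroup X of the symmetric group on M generated by λ and μ satisfies x^n = 1 for every x ∈ X; in particular X is a finite p-group. -/

import Mathlib

namespace Stmt5Aux

variable {p l : ℕ}

/-- Cast `ZMod (p^l) → ZMod (p^k)` for `k ≤ l`. -/
def ck (p l k : ℕ) (h : k ≤ l) : ZMod (p ^ l) →+* ZMod (p ^ k) :=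
  ZMod.castHom (pow_dvd_pow p h) (ZMod (p ^ k))

lemma ck_trans {k' k : ℕ} (h1 : k' ≤ k) (h2 : k ≤ l) (x : ZMod (p ^ l)) :
    ZMod.castHom (pow_dvd_pow p h1) (ZMod (p ^ k')) (ck p l k h2 x)
      = ck p l k' (h1.trans h2) x :=
  DFunLike.congr_fun (ZMod.castHom_comp (pow_dvd_pow p h1) (pow_dvd_pow p h2)) x

/-- The iterated wreath product condition. -/
def IsW (p l : ℕ) (σ : Equiv.Perm (ZMod (p ^ l))) : Prop :=
  ∀ k, ∀ hk : k < l, ∀ i j : ZMod (p ^ l),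
    ck p l k hk.le i = ck p l k hk.le j →
    ck p l (k + 1) hk (σ i) - ck p l (k + 1) hk (σ j)
      = ck p l (k + 1) hk i - ck p l (k + 1) hk j

lemma IsW.cast_apply {σ : Equiv.Perm (ZMod (p ^ l))} (hσ : IsW p l σ) {k : ℕ} (hk : k ≤ l)
    {i j : ZMod (p ^ l)} (h : ck p l k hk i = ck p l k hk j) :
    ck p l k hk (σ i) = ck p l k hk (σ j) := by
  rcases k with _ | k
  · haveI : Subsingleton (ZMod (p ^ 0)) := by rw [pow_zero]; infer_instance
    exact Subsingleton.elim _ _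
  · have hkl : k < l := hk
    have h0 : ck p l k hkl.le i = ck p l k hkl.le j := by
      rw [← ck_trans (Nat.le_succ k) hk i, ← ck_trans (Nat.le_succ k) hk j, h]
    have h1 := hσ k hkl i j h0
    have hij : ck p l (k + 1) hk i = ck p l (k + 1) hk j := h
    rw [hij, sub_self, sub_eq_zero] at h1
    exact h1

lemma ck_section (hp : p ≠ 0) {k : ℕ} (hk : k ≤ l) (x : ZMod (p ^ k)) :
    ck p l k hk ((x.val : ZMod (p ^ l))) = x := by
  haveI : NeZero (p ^ k) := ⟨pow_ne_zero k hp⟩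
  rw [map_natCast, ZMod.natCast_zmod_val]

lemma IsW.cast_apply_iff (hp : p ≠ 0) {σ : Equiv.Perm (ZMod (p ^ l))} (hσ : IsW p l σ)
    {k : ℕ} (hk : k ≤ l) (i j : ZMod (p ^ l)) :
    ck p l k hk (σ i) = ck p l k hk (σ j) ↔ ck p l k hk i = ck p l k hk j := by
  haveI : NeZero (p ^ k) := ⟨pow_ne_zero k hp⟩
  constructor
  · intro h
    set F : ZMod (p ^ k) → ZMod (p ^ k) :=
      fun x => ck p l k hk (σ ((x.val : ZMod (p ^ l)))) with hF
    have hFc : ∀ w : ZMod (p ^ l), F (ck p l k hk w) = ck p l k hk (σ w) := by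
      intro w
      exact hσ.cast_apply hk (ck_section hp hk _)
    have hFsurj : Function.Surjective F := by
      intro y
      obtain ⟨w, hw⟩ : ∃ w, ck p l k hk w = y :=
        ⟨(y.val : ZMod (p ^ l)), ck_section hp hk y⟩
      exact ⟨ck p l k hk (σ⁻¹ w), by rw [hFc, Equiv.Perm.inv_def, Equiv.apply_symm_apply, hw]⟩
    have hFinj : Function.Injective F := Finite.injective_iff_surjective.mpr hFsurj
    have : F (ck p l k hk i) = F (ck p l k hk j) := by rw [hFc, hFc, h]
    exact hFinj this
  · exact hσ.cast_apply hk

/-- The subgroup of permutations satisfying `IsW`. -/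
def Wgrp (p l : ℕ) (hp : p ≠ 0) : Subgroup (Equiv.Perm (ZMod (p ^ l))) where
  carrier := {σ | IsW p l σ}
  one_mem' := by
    intro k hk i j h
    simp only [Equiv.Perm.coe_one, id_eq]
  mul_mem' := by
    intro σ τ hσ hτ k hk i j h
    have h1 : ck p l k hk.le (τ i) = ck p l k hk.le (τ j) := hτ.cast_apply hk.le h
    have h2 := hσ k hk (τ i) (τ j) h1
    have h3 := hτ k hk i j h
    rw [Equiv.Perm.mul_apply, Equiv.Perm.mul_apply]
    rw [h2, h3]
  inv_mem' := by
    intro σ hσ k hk i j h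
    have h0 : ck p l k hk.le (σ (σ⁻¹ i)) = ck p l k hk.le (σ (σ⁻¹ j)) := by
      rw [Equiv.Perm.inv_def, Equiv.apply_symm_apply, Equiv.apply_symm_apply]; exact h
    have h1 : ck p l k hk.le (σ⁻¹ i) = ck p l k hk.le (σ⁻¹ j) :=
      (hσ.cast_apply_iff hp hk.le _ _).mp h0
    have h2 := hσ k hk (σ⁻¹ i) (σ⁻¹ j) h1
    rw [Equiv.Perm.inv_def, Equiv.apply_symm_apply, Equiv.apply_symm_apply] at h2
    exact h2.symm

lemma p_mul_eq_zero (hp : p ≠ 0) {k : ℕ} (d : ZMod (p ^ (k + 1)))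
    (hd : ZMod.castHom (pow_dvd_pow p (Nat.le_succ k)) (ZMod (p ^ k)) d = 0) :
    (p : ZMod (p ^ (k + 1))) * d = 0 := by
  haveI : NeZero (p ^ (k + 1)) := ⟨pow_ne_zero _ hp⟩
  have h1 : ((d.val : ℕ) : ZMod (p ^ k)) = 0 := by
    rw [ZMod.natCast_val]
    simpa using hd
  rw [ZMod.natCast_eq_zero_iff] at h1
  obtain ⟨c, hc⟩ := h1
  have h2 : (p : ZMod (p ^ (k + 1))) * d = ((p * d.val : ℕ) : ZMod (p ^ (k + 1))) := by
    rw [Nat.cast_mul, ZMod.natCast_zmod_val]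
  have h3 : p * (p ^ k * c) = p ^ (k + 1) * c := by ring
  rw [h2, hc, h3, Nat.cast_mul, ZMod.natCast_self, zero_mul]

lemma pow_cast (hp : p ≠ 0) (k : ℕ) :
    ∀ hk : k ≤ l, ∀ σ : Equiv.Perm (ZMod (p ^ l)), IsW p l σ →
      ∀ i, ck p l k hk ((σ ^ p ^ k) i) = ck p l k hk i := by
  induction k with
  | zero =>
    intro hk σ hσ i
    haveI : Subsingleton (ZMod (p ^ 0)) := by rw [pow_zero]; infer_instance
    exact Subsingleton.elim _ _
  | succ k ih =>
    intro hk σ hσ i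
    have hkl : k < l := hk
    set τ := σ ^ p ^ k with hτ
    have hτW : IsW p l τ := Subgroup.pow_mem (Wgrp p l hp) hσ (p ^ k)
    have hfix : ∀ x, ck p l k hkl.le (τ x) = ck p l k hkl.le x := ih hkl.le σ hσ
    have hfixm : ∀ m, ∀ x, ck p l k hkl.le ((τ ^ m) x) = ck p l k hkl.le x := by
      intro m
      induction m with
      | zero => intro x; simp
      | succ m ihm =>
        intro x
        rw [pow_succ, Equiv.Perm.mul_apply, ihm (τ x), hfix x]
    have claim : ∀ m : ℕ, ck p l (k + 1) hk ((τ ^ m) i)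
        = ck p l (k + 1) hk i
          + m * (ck p l (k + 1) hk (τ i) - ck p l (k + 1) hk i) := by
      intro m
      induction m with
      | zero => simp
      | succ m ihm =>
        have hcong : ck p l k hkl.le ((τ ^ m) i) = ck p l k hkl.le i := hfixm m i
        have h2 := hτW k hkl ((τ ^ m) i) i hcong
        have happ : (τ ^ (m + 1)) i = τ ((τ ^ m) i) := by
          rw [pow_succ', Equiv.Perm.mul_apply]
        rw [happ]
        push_cast
        linear_combination h2 + ihm
    have hd0 : ZMod.castHom (pow_dvd_pow p (Nat.le_succ k)) (ZMod (p ^ k))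
        (ck p l (k + 1) hk (τ i) - ck p l (k + 1) hk i) = 0 := by
      rw [map_sub, ck_trans (Nat.le_succ k) hk, ck_trans (Nat.le_succ k) hk, hfix i, sub_self]
    have hz := p_mul_eq_zero hp _ hd0
    have hpow : σ ^ p ^ (k + 1) = τ ^ p := by rw [hτ, ← pow_mul, pow_succ]
    rw [hpow, claim p, hz, add_zero]


lemma ck_val (hp : p ≠ 0) {k : ℕ} (hk : k ≤ l) (x : ZMod (p ^ l)) :
    (ck p l k hk x).val = x.val % p ^ k := by
  haveI : NeZero (p ^ l) := ⟨pow_ne_zero _ hp⟩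
  simp only [ck, ZMod.castHom_apply]
  rw [← ZMod.natCast_val, ZMod.val_natCast]

end Stmt5Aux

/-- Proposition 4.1: for `n = p^l`, the subgroup of the symmetric group on `ℤ/n` generated by
`λ : i ↦ i + 1` and `μ` (cycling each block of `p` consecutive residues) satisfies `x ^ n = 1`
for all its elements; in particular it is a finite `p`-group. -/
theorem stmt_5 (p l n : ℕ) (hp : p.Prime) (hl : 1 ≤ l) (hn : n = p ^ l)
    (lam mu : Equiv.Perm (ZMod n))
    (hlam : ∀ i : ZMod n, lam i = i + 1)
    (hmu : ∀ i : ZMod n,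
      mu i = if i.val % p = p - 1 then i - ((p : ZMod n) - 1) else i + 1) :
    ∀ x ∈ Subgroup.closure ({lam, mu} : Set (Equiv.Perm (ZMod n))), x ^ n = 1 := by
  subst hn
  intro x hx
  have hp0 : p ≠ 0 := hp.ne_zero
  haveI : NeZero (p ^ l) := ⟨pow_ne_zero _ hp0⟩
  have hlamW : lam ∈ Stmt5Aux.Wgrp p l hp0 := by
    show Stmt5Aux.IsW p l lam
    intro k hk i j h
    rw [hlam, hlam, map_add, map_add]
    ring
  have hmuW : mu ∈ Stmt5Aux.Wgrp p l hp0 := by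
    show Stmt5Aux.IsW p l mu
    intro k hk i j h
    rcases Nat.eq_zero_or_pos k with rfl | hkpos
    · have hpz : ((p : ℕ) : ZMod (p ^ (0 + 1))) = 0 := by
        rw [ZMod.natCast_eq_zero_iff]
        exact dvd_of_eq (pow_one p)
      have key : ∀ y : ZMod (p ^ l),
          Stmt5Aux.ck p l (0 + 1) hk (mu y) = Stmt5Aux.ck p l (0 + 1) hk y + 1 := by
        intro y
        rw [hmu y]
        split_ifs
        · simp only [map_sub, map_natCast, map_one, hpz]
          ring
        · rw [map_add, map_one]
      rw [key, key]
      ring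
    · have h1 : Stmt5Aux.ck p l 1 (le_trans hkpos hk.le) i
          = Stmt5Aux.ck p l 1 (le_trans hkpos hk.le) j := by
        rw [← Stmt5Aux.ck_trans hkpos hk.le i, ← Stmt5Aux.ck_trans hkpos hk.le j, h]
      have hval : i.val % p = j.val % p := by
        have h2 := congrArg ZMod.val h1
        rw [Stmt5Aux.ck_val hp0, Stmt5Aux.ck_val hp0, pow_one] at h2
        exact h2
      rw [hmu i, hmu j, hval]
      split_ifs
      · simp only [map_sub]
        ring
      · simp only [map_add]
        ring
  have hle : Subgroup.closure ({lam, mu} : Set (Equiv.Perm (ZMod (p ^ l))))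
      ≤ Stmt5Aux.Wgrp p l hp0 := by
    rw [Subgroup.closure_le]
    rintro y hy
    simp only [Set.mem_insert_iff, Set.mem_singleton_iff] at hy
    rcases hy with rfl | rfl
    · exact hlamW
    · exact hmuW
  have hxW : Stmt5Aux.IsW p l x := hle hx
  have hinj : Function.Injective (Stmt5Aux.ck p l l le_rfl) := by
    have hid : Stmt5Aux.ck p l l le_rfl = RingHom.id (ZMod (p ^ l)) := ZMod.castHom_self
    rw [hid]
    exact fun a b hab => hab
  refine Equiv.ext fun i => ?_
  have h := Stmt5Aux.pow_cast hp0 l le_rfl x hxW i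
  have := hinj h
  simpa using this
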